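/- For every n ≥ 8 (with n ∈ ℕ), a(n) = a(n−2) + a(n−3), where a(n) := V·D^{n−5}·Vᵀ. -/
import Mathlib

open Matrix

set_option maxHeartbeats 1000000 in
theorem stmt_5 :
    let D : Matrix (Fin 7) (Fin 7) ℤ :=
      !![0,0,0,0,0,1,1;
         0,0,0,0,1,0,0;
         0,1,0,0,0,0,0;
         1,0,0,0,0,0,0;
         0,0,1,1,0,0,0;
         0,1,0,0,0,0,0;
         1,0,0,0,0,0,0]
    let V : Fin 7 → ℤ := fun _ => 1
    let a : ℕ → ℤ := fun n => V ⬝ᵥ ((D ^ (n - 5)) *ᵥ V)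
    ∀ n : ℕ, 8 ≤ n → a n = a (n - 2) + a (n - 3) := by
  intro D V a n hn
  have u1 : V ᵥ* D = ![2,2,1,1,1,1,1] := by
    ext i; fin_cases i <;> rfl
  have u2 : (![2,2,1,1,1,1,1] : Fin 7 → ℤ) ᵥ* D = ![2,2,1,1,2,2,2] := by
    ext i; fin_cases i <;> rfl
  have u3 : (![2,2,1,1,2,2,2] : Fin 7 → ℤ) ᵥ* D = ![3,3,2,2,2,2,2] := by
    ext i; fin_cases i <;> rfl
  have key : V ᵥ* (D ^ 3) = V ᵥ* D + V := by
    have hD3 : D ^ 3 = D * D * D := by rw [pow_succ, pow_succ, pow_one]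
    rw [hD3, ← Matrix.vecMul_vecMul, ← Matrix.vecMul_vecMul, u1, u2, u3]
    ext i; fin_cases i <;> rfl
  have h1 : n - 5 = 3 + (n - 8) := by omega
  have h2 : n - 2 - 5 = 1 + (n - 8) := by omega
  have h3 : n - 3 - 5 = n - 8 := by omega
  show V ⬝ᵥ ((D ^ (n - 5)) *ᵥ V) = V ⬝ᵥ ((D ^ (n - 2 - 5)) *ᵥ V) + V ⬝ᵥ ((D ^ (n - 3 - 5)) *ᵥ V)
  rw [h1, h2, h3, pow_add, pow_add, pow_one, ← Matrix.mulVec_mulVec, ← Matrix.mulVec_mulVec,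
    Matrix.dotProduct_mulVec, key, add_dotProduct, ← Matrix.dotProduct_mulVec]
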